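/- If K : Θ → ℝ is defined by K(θ) = E[e^{−h*}(e^{h*−h_θ} − (h* − h_θ) − 1)] where h_θ, h* are random variables with h* = h_{θ*}, and P(h* ≠ h_θ) > 0 for all θ ≠ θ* with e^{−h*}(e^{h*−h_θ} − (h*−h_θ) − 1) integrable and a.s. h* < ∞ on {h_θ < ∞}, then K(θ) ≥ 0 for all θ, and K(θ) = 0 if and only if θ = θ*. -/

import Mathlib

open MeasureTheory
open scoped ENNReal

open scoped Classical in
/-- The nonnegative integrand `e^{−a}(e^{a−b} − (a−b) − 1)` for
`a, b ∈ ℝ ∪ {+∞}`, with the conventions `e^{−∞} = 0` and `∞·e^{−∞} = 0`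
(so the value is `0` when `a = ∞`, and `+∞` when `a < ∞` and `b = ∞`). -/
noncomputable def contrastFn (a b : WithTop ℝ) : ℝ≥0∞ :=
  if a = ⊤ then 0
  else if b = ⊤ then ⊤
  else ENNReal.ofReal
    (Real.exp (-(a.untopD 0)) *
      (Real.exp ((a.untopD 0) - (b.untopD 0)) - ((a.untopD 0) - (b.untopD 0)) - 1))

/-- identifiability of the pseudo-likelihood contrast. With
`K(θ) = E[e^{−h*}(e^{h* − h_θ} − (h* − h_θ) − 1)]`, `h* = h_{θ*}`, if
`P(h* ≠ h_θ) > 0` for every `θ ≠ θ*`, the integrand is integrable, and a.s.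
`h* < ∞` on `{h_θ < ∞}`, then `K(θ) ≥ 0` for all `θ`, with `K(θ) = 0` iff
`θ = θ*`. -/

lemma contrastFn_self (a : WithTop ℝ) : contrastFn a a = 0 := by
  unfold contrastFn
  split_ifs with h1
  · rfl
  · simp

lemma contrastFn_eq_zero {a b : WithTop ℝ} (h0 : contrastFn a b = 0)
    (hf : b ≠ ⊤ → a ≠ ⊤) : a = b := by
  unfold contrastFn at h0
  split_ifs at h0 with h1 h2
  · by_contra hne
    have hb : b = ⊤ := by
      by_contra hb
      exact hf hb h1
    exact hne (h1.trans hb.symm)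
  · exact absurd h0 (by simp)
  · -- both finite
    set x : ℝ := a.untopD 0 - b.untopD 0 with hx
    have hpos : (0:ℝ) < Real.exp (-(a.untopD 0)) := Real.exp_pos _
    have hle : Real.exp (-(a.untopD 0)) * (Real.exp x - x - 1) ≤ 0 :=
      ENNReal.ofReal_eq_zero.mp h0
    have hx0 : x = 0 := by
      by_contra hx0
      have := Real.add_one_lt_exp hx0
      nlinarith
    have hab : a.untopD 0 = b.untopD 0 := by linarith [sub_eq_zero.mp hx0]
    lift a to ℝ using h1 with a'
    lift b to ℝ using h2 with b'
    simpa using hab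

theorem campbell_stmt16 {Ω : Type*} [MeasurableSpace Ω] {Θ : Type*}
    (μ : Measure Ω) [IsProbabilityMeasure μ]
    (h : Θ → Ω → WithTop ℝ) (θstar : Θ)
    (hmeas : ∀ θ : Θ, Measurable fun ω => contrastFn (h θstar ω) (h θ ω))
    (hint : ∀ θ : Θ, (∫⁻ ω, contrastFn (h θstar ω) (h θ ω) ∂μ) ≠ ⊤)
    (hfin : ∀ θ : Θ, ∀ᵐ ω ∂μ, h θ ω ≠ ⊤ → h θstar ω ≠ ⊤)
    (hident : ∀ θ : Θ, θ ≠ θstar → μ {ω | h θstar ω ≠ h θ ω} ≠ 0) :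
    ∀ θ : Θ, 0 ≤ (∫⁻ ω, contrastFn (h θstar ω) (h θ ω) ∂μ) ∧
      ((∫⁻ ω, contrastFn (h θstar ω) (h θ ω) ∂μ) = 0 ↔ θ = θstar) := by
  intro θ
  refine ⟨zero_le, ?_, ?_⟩
  · intro hK
    by_contra hne
    have hae : ∀ᵐ ω ∂μ, contrastFn (h θstar ω) (h θ ω) = 0 :=
      (lintegral_eq_zero_iff (hmeas θ)).mp hK
    have heq : ∀ᵐ ω ∂μ, h θstar ω = h θ ω := by
      filter_upwards [hae, hfin θ] with ω h0 hf
      exact contrastFn_eq_zero h0 hf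
    exact hident θ hne heq
  · rintro rfl
    simp [contrastFn_self]
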